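/- Let C = C_{b,D} be an integer Cantor set with 0 ∈ D and increasing enumeration (k_n). Then for every integer q ≥ 1, the limit lim_{N→∞} (1/N) |{n ≤ N : q divides k_n}| exists and is strictly positive. -/

import Mathlib

lemma sum_range_mul' {β : Type*} [AddCommMonoid β] (a b : ℕ) (f : ℕ → β) :
    ∑ n ∈ Finset.range (a * b), f n
      = ∑ c ∈ Finset.range a, ∑ r ∈ Finset.range b, f (b * c + r) := by
  induction a with
  | zero => simp
  | succ a ih =>
    rw [Nat.succ_mul, Finset.sum_range_add, ih, Finset.sum_range_succ]
    congr 1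
    refine Finset.sum_congr rfl fun r _ => ?_
    ring_nf

lemma exists_idempotent_pow (q b : ℕ) (hq : 1 ≤ q) :
    ∃ L, 1 ≤ L ∧ (b : ZMod q)^L * (b : ZMod q)^L = (b : ZMod q)^L := by
  haveI : NeZero q := ⟨by omega⟩
  obtain ⟨i, j, hne, hij⟩ := Finite.exists_ne_map_eq_of_infinite (fun n : ℕ => (b : ZMod q)^n)
  wlog hlt : i < j generalizing i j
  · exact this j i hne.symm hij.symm (by omega)
  set p := j - i with hp
  have hp1 : 1 ≤ p := by omega
  have hper : ∀ t, i ≤ t → (b : ZMod q)^(t + p) = (b : ZMod q)^t := by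
    intro t ht
    have : t + p = (t - i) + j := by omega
    rw [this, pow_add, ← hij, ← pow_add]
    congr 1; omega
  have hper' : ∀ t, i ≤ t → ∀ n, (b : ZMod q)^(t + n * p) = (b : ZMod q)^t := by
    intro t ht n
    induction n with
    | zero => simp
    | succ n ihn =>
      have : t + (n+1) * p = (t + n*p) + p := by ring
      rw [this, hper _ (by omega), ihn]
  refine ⟨(i+1)*p, by nlinarith, ?_⟩
  rw [← pow_add]
  have : (i+1)*p + (i+1)*p = (i+1)*p + (i+1) * p := rfl
  exact hper' ((i+1)*p) (by nlinarith) (i+1)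

lemma cantor_key
    (b : ℕ) (hb : 3 ≤ b) (D : Finset ℕ) (hD : 2 ≤ D.card) (hDb : D.card < b)
    (hDsub : ∀ d ∈ D, d < b) (h0 : 0 ∈ D)
    (k : ℕ → ℕ) (hk : StrictMono k)
    (hkr : Set.range k = {m : ℕ | ∀ d ∈ Nat.digits b m, d ∈ D}) :
    ∃ dd : ℕ → ℕ, (∀ j, j < D.card → dd j < b) ∧ k 0 = 0 ∧
      ∀ n, k n = b * k (n / D.card) + dd (n % D.card) := by
  set s := D.card with hs
  have hb1 : 1 < b := by omega
  have hs2 : 2 ≤ s := hD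
  set od := D.orderIsoOfFin (rfl : D.card = s) with hod
  set dd : ℕ → ℕ := fun j => if h : j < s then (od ⟨j, h⟩ : ℕ) else 0 with hdd
  have ddmem : ∀ j (h : j < s), dd j ∈ D := by
    intro j h
    simp only [hdd, dif_pos h]
    exact (od ⟨j, h⟩).2
  have ddlt : ∀ j, j < s → dd j < b := fun j h => hDsub _ (ddmem j h)
  have ddmono : ∀ {j j'}, j < j' → j' < s → dd j < dd j' := by
    intro j j' hjj h'
    simp only [hdd, dif_pos h', dif_pos (lt_trans hjj h')]
    exact_mod_cast od.strictMono (show (⟨j, lt_trans hjj h'⟩ : Fin s) < ⟨j', h'⟩ from hjj)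
  have dd0 : dd 0 = 0 := by
    obtain ⟨j, hj⟩ := od.surjective ⟨0, h0⟩
    have h1 : (od j : ℕ) = 0 := by rw [hj]
    have h2 : (od ⟨0, by omega⟩ : ℕ) ≤ (od j : ℕ) := by
      exact_mod_cast od.monotone (show (⟨0, by omega⟩ : Fin s) ≤ j by simp [Fin.le_def])
    simp only [hdd, dif_pos (show 0 < s by omega)]
    omega
  have hk0 : k 0 = 0 := by
    have : (0 : ℕ) ∈ Set.range k := by
      rw [hkr]; intro d hd; simp at hd
    obtain ⟨n, hn⟩ := this
    have := hk.monotone (Nat.zero_le n)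
    omega
  have hC : ∀ n, ∀ d ∈ Nat.digits b (k n), d ∈ D := by
    intro n
    have : k n ∈ Set.range k := ⟨n, rfl⟩
    rwa [hkr] at this
  set g : ℕ → ℕ := fun n => b * k (n / s) + dd (n % s) with hg
  have hgmono : StrictMono g := by
    intro n n' hnn
    have hdle : n / s ≤ n' / s := Nat.div_le_div_right hnn.le
    have hm : n % s < s := Nat.mod_lt _ (by omega)
    have hm' : n' % s < s := Nat.mod_lt _ (by omega)
    rcases eq_or_lt_of_le hdle with heq | hlt
    · have : n % s < n' % s := by
        have e1 := Nat.div_add_mod n s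
        have e2 := Nat.div_add_mod n' s
        rw [heq] at e1
        omega
      simp only [hg, heq]
      exact Nat.add_lt_add_left (ddmono this hm') _
    · have h1 : dd (n % s) < b := ddlt _ hm
      have h2 : k (n / s) < k (n' / s) := hk hlt
      simp only [hg]
      have : b * k (n / s) + b ≤ b * k (n' / s) := by
        have : k (n / s) + 1 ≤ k (n' / s) := h2
        nlinarith
      omega
  have hgrange : Set.range g = Set.range k := by
    rw [hkr]
    ext m
    constructor
    · rintro ⟨n, rfl⟩
      set x := k (n / s) with hx
      set d0 := dd (n % s) with hd0
      have hd0D : d0 ∈ D := ddmem _ (Nat.mod_lt _ (by omega))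
      have hd0b : d0 < b := hDsub _ hd0D
      intro dig hdig
      rcases Nat.eq_zero_or_pos (g n) with hz | hpos
      · rw [hz] at hdig; simp at hdig
      · have hdig' : Nat.digits b (g n) = d0 :: Nat.digits b x := by
          have e1 : g n % b = d0 := by
            simp only [hg, ← hd0, ← hx, Nat.mul_add_mod]
            exact Nat.mod_eq_of_lt hd0b
          have e2 : g n / b = x := by
            simp only [hg, ← hd0, ← hx]
            rw [Nat.mul_add_div (by omega)]
            simp [Nat.div_eq_of_lt hd0b]
          rw [Nat.digits_def' hb1 hpos, e1, e2]
        rw [hdig'] at hdig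
        rcases List.mem_cons.mp hdig with h | h
        · rwa [h]
        · exact hC _ _ h
    · intro hm
      rcases Nat.eq_zero_or_pos m with hz | hpos
      · refine ⟨0, ?_⟩
        simp [hg, hk0, dd0, hz, Nat.zero_div, Nat.zero_mod]
      · have hdig : Nat.digits b m = m % b :: Nat.digits b (m / b) :=
          Nat.digits_def' hb1 hpos
        have hmb : m % b ∈ D := by
          apply hm; rw [hdig]; exact List.mem_cons_self
        have hdiv : m / b ∈ Set.range k := by
          rw [hkr]
          intro d hd
          apply hm; rw [hdig]; exact List.mem_cons_of_mem _ hd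
        obtain ⟨x, hx⟩ := hdiv
        obtain ⟨j, hj⟩ := od.surjective ⟨m % b, hmb⟩
        have hjv : dd j.val = m % b := by
          simp only [hdd, dif_pos (show j.val < s from j.isLt)]
          exact congrArg Subtype.val hj
        refine ⟨s * x + j.val, ?_⟩
        have e1 : (s * x + j.val) / s = x := by
          rw [Nat.mul_add_div (by omega)]
          simp [Nat.div_eq_of_lt (show j.val < s from j.isLt)]
        have e2 : (s * x + j.val) % s = j.val := by
          rw [Nat.mul_add_mod]
          exact Nat.mod_eq_of_lt j.isLt
        simp only [hg, e1, e2, hx, hjv]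
        exact Nat.div_add_mod m b
  have : k = g := (hk.range_inj hgmono).mp hgrange.symm
  exact ⟨dd, ddlt, hk0, fun n => by rw [congrFun this n]⟩

lemma cantor_key2
    (b s : ℕ) (hb : 2 ≤ b) (hs : 2 ≤ s) (dd k : ℕ → ℕ)
    (ddlt : ∀ j, j < s → dd j < b) (hk0 : k 0 = 0)
    (KEY0 : ∀ n, k n = b * k (n / s) + dd (n % s)) :
    (∀ Lv c, c < s^Lv → k c < b^Lv) ∧
    (∀ Lv m c, c < s^Lv → k (s^Lv * m + c) = b^Lv * k m + k c) := by
  have KEY1 : ∀ m j, j < s → k (s * m + j) = b * k m + dd j := by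
    intro m j hj
    have e1 : (s * m + j) / s = m := by
      rw [Nat.mul_add_div (by omega)]; simp [Nat.div_eq_of_lt hj]
    have e2 : (s * m + j) % s = j := by
      rw [Nat.mul_add_mod]; exact Nat.mod_eq_of_lt hj
    rw [KEY0 (s * m + j), e1, e2]
  constructor
  · intro Lv
    induction Lv with
    | zero =>
      intro c hc
      rw [pow_zero] at hc
      have : c = 0 := by omega
      subst this; simp [hk0]
    | succ Lv ih =>
      intro c hc
      have hj : c % s < s := Nat.mod_lt _ (by omega)
      have hc' : c / s < s ^ Lv := by
        apply Nat.div_lt_of_lt_mul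
        rw [pow_succ] at hc
        have := Nat.mul_comm s (s^Lv)
        omega
      have h1 := ih _ hc'
      have h2 := ddlt _ hj
      have := KEY0 c
      have : k c ≤ b * (b ^ Lv - 1) + (b - 1) := by
        rw [KEY0 c]
        have : k (c / s) ≤ b ^ Lv - 1 := by omega
        have hb' : dd (c % s) ≤ b - 1 := by omega
        nlinarith
      have hbp : 1 ≤ b ^ Lv := Nat.one_le_pow _ _ (by omega)
      rw [pow_succ]
      nlinarith
  · intro Lv
    induction Lv with
    | zero =>
      intro m c hc
      rw [pow_zero] at hc
      have : c = 0 := by omega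
      subst this
      simp [hk0]
    | succ Lv ih =>
      intro m c hc
      have hj : c % s < s := Nat.mod_lt _ (by omega)
      have hc' : c / s < s ^ Lv := by
        apply Nat.div_lt_of_lt_mul
        rw [pow_succ] at hc
        have := Nat.mul_comm s (s^Lv)
        omega
      have edec : s ^ (Lv+1) * m + c = s * (s ^ Lv * m + c / s) + c % s := by
        have := Nat.div_add_mod c s
        rw [pow_succ]; ring_nf; omega
      rw [edec, KEY1 _ _ hj, ih _ _ hc', KEY0 c]
      ring

set_option maxHeartbeats 2000000 in
/-- Let `(k_n)` enumerate the Cantor set `C_{b,D}` (with `0 ∈ D`) in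
increasing order. For every `q ≥ 1`, the density of `{n < N : q ∣ k_n}` converges,
as `N → ∞`, to a strictly positive limit. -/
theorem cantor_divisible_positive_density
    (b : ℕ) (hb : 3 ≤ b) (D : Finset ℕ) (hD : 2 ≤ D.card) (hDb : D.card < b)
    (hDsub : ∀ d ∈ D, d < b) (h0 : 0 ∈ D)
    (k : ℕ → ℕ) (hk : StrictMono k)
    (hkr : Set.range k = {m : ℕ | ∀ d ∈ Nat.digits b m, d ∈ D})
    (q : ℕ) (hq : 1 ≤ q) :
    ∃ L : ℝ, 0 < L ∧ Filter.Tendsto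
      (fun N => (((Finset.range N).filter (fun n => q ∣ k n)).card : ℝ) / (N : ℝ))
      Filter.atTop (nhds L) := by
  classical
  haveI : NeZero q := ⟨by omega⟩
  obtain ⟨dd, ddlt, hk0, KEY0⟩ := cantor_key b hb D hD hDb hDsub h0 k hk hkr
  obtain ⟨KBND, KEY2⟩ := cantor_key2 b D.card (by omega) hD dd k ddlt hk0 KEY0
  obtain ⟨L, hL1, hLe⟩ := exists_idempotent_pow q b hq
  set s := D.card with hsdef
  set e : ZMod q := (b : ZMod q)^L with hedef
  have he : e * e = e := hLe
  set S := s ^ L with hSdef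
  have hS2 : 2 ≤ S := le_trans hD (Nat.le_self_pow (by omega) s)
  -- idempotent powers
  have heM : ∀ M, 1 ≤ M → e ^ M = e := by
    intro M hM
    induction M with
    | zero => omega
    | succ M ih =>
      rcases Nat.eq_zero_or_pos M with h | h
      · subst h; simp
      · rw [pow_succ, ih h, he]
  -- the basic cast identity
  have CAST : ∀ M, 1 ≤ M → ∀ m r, r < S^M →
      ((k (S^M * m + r) : ZMod q)) = e * (k m : ZMod q) + (k r : ZMod q) := by
    intro M hM m r hr
    have hpow : S ^ M = s ^ (L * M) := by rw [hSdef, ← pow_mul]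
    rw [hpow] at hr ⊢
    rw [KEY2 (L*M) m r hr]
    push_cast
    congr 1
    rw [pow_mul, ← hedef, heM M hM]
  -- the subgroup E
  set E : Set (ZMod q) := Set.range (fun m => e * (k m : ZMod q)) with hEdef
  have hE0 : (0 : ZMod q) ∈ E := ⟨0, by simp [hk0]⟩
  have hmemE : ∀ m : ℕ, e * (k m : ZMod q) ∈ E := fun m => ⟨m, rfl⟩
  have hself : ∀ m : ℕ, m < S ^ (m + 1) := by
    intro m
    calc m < 2 ^ m := Nat.lt_two_pow_self
    _ ≤ S ^ m := Nat.pow_le_pow_left hS2 m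
    _ ≤ S ^ (m+1) := Nat.pow_le_pow_right (by omega) (by omega)
  have hEadd : ∀ x ∈ E, ∀ y ∈ E, x + y ∈ E := by
    rintro x ⟨m, rfl⟩ y ⟨m', rfl⟩
    refine ⟨S ^ (m+1) * m' + m, ?_⟩
    show e * ((k (S ^ (m+1) * m' + m) : ℕ) : ZMod q) = e * (k m : ZMod q) + e * (k m' : ZMod q)
    rw [CAST (m+1) (by omega) m' m (hself m)]
    rw [mul_add, ← mul_assoc, he]
    ring
  have hEneg : ∀ x ∈ E, -x ∈ E := by
    intro x hx
    have hsmul : ∀ n : ℕ, n • x ∈ E := by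
      intro n
      induction n with
      | zero => simpa using hE0
      | succ n ih =>
        rw [succ_nsmul]
        exact hEadd _ ih _ hx
    have : -x = (q - 1) • x := by
      have hq0 : (q : ZMod q) = 0 := ZMod.natCast_self q
      have : ((q - 1 : ℕ) : ZMod q) = -1 := by
        push_cast [Nat.cast_sub hq]
        rw [hq0]; ring
      rw [nsmul_eq_mul, this]; ring
    rw [this]; exact hsmul _
  have hEsub : ∀ x ∈ E, ∀ y ∈ E, x - y ∈ E := by
    intro x hx y hy
    rw [sub_eq_add_neg]
    exact hEadd _ hx _ (hEneg _ hy)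
  -- finite version
  set HF : Finset (ZMod q) := Finset.univ.filter (fun h => h ∈ E) with hHFdef
  have hHF : ∀ h : ZMod q, h ∈ HF ↔ h ∈ E := by
    intro h; simp [hHFdef]
  have hne : HF.Nonempty := ⟨0, (hHF 0).mpr hE0⟩
  -- window J
  have hwit0 : ∀ h : ZMod q, ∃ j, 1 ≤ j ∧ (h ∈ E → ∃ c, c < S^j ∧ e * (k c : ZMod q) = h) := by
    intro h
    by_cases hh : h ∈ E
    · obtain ⟨m, hm⟩ := hh
      exact ⟨m + 1, by omega, fun _ => ⟨m, hself m, hm⟩⟩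
    · exact ⟨1, le_refl _, fun h' => absurd h' hh⟩
  choose jf hjf1 hjf2 using hwit0
  set J := Finset.univ.sup jf with hJdef
  have hJ1 : 1 ≤ J := le_trans (hjf1 0) (Finset.le_sup (Finset.mem_univ 0))
  have hJwit : ∀ h ∈ E, ∃ c, c < S^J ∧ e * (k c : ZMod q) = h := by
    intro h hh
    obtain ⟨c, hc, hce⟩ := hjf2 h hh
    exact ⟨c, lt_of_lt_of_le hc (Nat.pow_le_pow_right (by omega)
      (Finset.le_sup (Finset.mem_univ h))), hce⟩
  -- counting function
  set A : ℕ → ZMod q → ℕ :=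
    fun M t => ((Finset.range (S^M)).filter (fun r => ((k r : ZMod q) = t))).card with hAdef
  have hAle : ∀ M t, A M t ≤ S^M := by
    intro M t
    calc A M t ≤ (Finset.range (S^M)).card := Finset.card_filter_le _ _
    _ = S^M := Finset.card_range _
  have REC : ∀ M, 1 ≤ M → ∀ j t,
      A (M + j) t = ∑ c ∈ Finset.range (S^j), A M (t - e * (k c : ZMod q)) := by
    intro M hM j t
    have hpow : S ^ (M + j) = S ^ j * S ^ M := by rw [pow_add, mul_comm]
    rw [hAdef]
    simp only [Finset.card_filter]
    rw [hpow, sum_range_mul']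
    refine Finset.sum_congr rfl fun c _ => ?_
    refine Finset.sum_congr rfl fun r hr => ?_
    have hr' : r < S ^ M := Finset.mem_range.mp hr
    rw [CAST M hM c r hr']
    congr 1
    rw [eq_iff_iff]
    constructor
    · intro h; rw [← h]; ring
    · intro h; rw [h]; ring
  have BLOCK : ∀ M, 1 ≤ M → ∀ m₀ : ℕ,
      ((Finset.range (m₀ * S^M)).filter (fun n => ((k n : ZMod q) = 0))).card
        = ∑ m ∈ Finset.range m₀, A M (-(e * (k m : ZMod q))) := by
    intro M hM m₀
    simp only [Finset.card_filter, hAdef]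
    rw [sum_range_mul']
    refine Finset.sum_congr rfl fun m _ => ?_
    refine Finset.sum_congr rfl fun r hr => ?_
    have hr' : r < S ^ M := Finset.mem_range.mp hr
    rw [CAST M hM m r hr']
    congr 1
    rw [eq_iff_iff]
    constructor
    · intro h; linear_combination h
    · intro h; linear_combination h
  -- real-valued normalized counts along the subsequence 1 + i*J
  have hSR : (2:ℝ) ≤ (S:ℝ) := by exact_mod_cast hS2
  have hSMpos : ∀ M : ℕ, (0:ℝ) < (S:ℝ)^M := fun M => pow_pos (by linarith) M
  set P : ℕ → ZMod q → ℝ :=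
    fun i t => (A (1 + i*J) t : ℝ) / (S:ℝ)^(1 + i*J) with hPdef
  have hAcastle : ∀ M t, (A M t : ℝ) ≤ (S:ℝ)^M := by
    intro M t
    have := hAle M t
    calc (A M t : ℝ) ≤ ((S^M : ℕ) : ℝ) := by exact_mod_cast this
    _ = (S:ℝ)^M := by push_cast; ring
  have hP0 : ∀ i t, 0 ≤ P i t := fun i t => by
    simp only [hPdef]; exact div_nonneg (Nat.cast_nonneg _) (le_of_lt (hSMpos _))
  have hP1 : ∀ i t, P i t ≤ 1 := fun i t => by
    simp only [hPdef]
    rw [div_le_one (hSMpos _)]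
    exact hAcastle _ _
  set mn : ℕ → ℝ := fun i => HF.inf' hne (P i) with hmndef
  set mx : ℕ → ℝ := fun i => HF.sup' hne (P i) with hmxdef
  have hmnle : ∀ i, ∀ h ∈ HF, mn i ≤ P i h := fun i h hh => Finset.inf'_le _ hh
  have hmxge : ∀ i, ∀ h ∈ HF, P i h ≤ mx i := fun i h hh => Finset.le_sup' _ hh
  have hmnmx : ∀ i, mn i ≤ mx i :=
    fun i => le_trans (hmnle i 0 ((hHF 0).mpr hE0)) (hmxge i 0 ((hHF 0).mpr hE0))
  have hmn0 : ∀ i, 0 ≤ mn i := fun i => Finset.le_inf' hne _ (fun h _ => hP0 i h)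
  have hmx1 : ∀ i, mx i ≤ 1 := fun i => Finset.sup'_le hne _ (fun h _ => hP1 i h)
  set β : ℝ := ((S:ℝ)^J)⁻¹ with hβdef
  have hSJ2 : (2:ℝ) ≤ (S:ℝ)^J := by
    calc (2:ℝ) ≤ (S:ℝ) := hSR
    _ = (S:ℝ)^1 := (pow_one _).symm
    _ ≤ (S:ℝ)^J := pow_le_pow_right₀ (by linarith) hJ1
  have hβpos : 0 < β := by rw [hβdef]; exact inv_pos.mpr (by linarith)
  have hβhalf : β ≤ 1/2 := by
    rw [hβdef]
    rw [inv_le_comm₀ (by linarith) (by norm_num)]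
    linarith
  -- the normalization identity
  have hPA : ∀ i t, (A (1 + i*J) t : ℝ) = P i t * (S:ℝ)^(1 + i*J) := by
    intro i t
    simp only [hPdef]
    field_simp
  -- main contraction estimates
  have G3 : ∀ i, ∀ t ∈ E,
      mn i + β * (mx i - mn i) ≤ P (i+1) t ∧ P (i+1) t ≤ mx i - β * (mx i - mn i) := by
    intro i t ht
    have hM1 : 1 ≤ 1 + i*J := by omega
    have hidx : 1 + (i+1)*J = (1 + i*J) + J := by ring
    set M := 1 + i*J with hMdef
    -- rewrite P (i+1) t
    have hPrw : P (i+1) t = (A (M + J) t : ℝ) / ((S:ℝ)^M * (S:ℝ)^J) := by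
      simp only [hPdef]
      rw [hidx, pow_add]
    have hrec := REC M hM1 J t
    have htc : ∀ c : ℕ, t - e * (k c : ZMod q) ∈ E := fun c => hEsub _ ht _ (hmemE c)
    have htcHF : ∀ c : ℕ, t - e * (k c : ZMod q) ∈ HF := fun c => (hHF _).mpr (htc c)
    constructor
    · -- lower bound, using a witness achieving the max
      obtain ⟨hstar, hstarmem, hstareq⟩ := Finset.exists_mem_eq_sup' hne (P i)
      have hstarE : hstar ∈ E := (hHF _).mp hstarmem
      obtain ⟨cs, hcslt, hcseq⟩ := hJwit (t - hstar) (hEsub _ ht _ hstarE)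
      have hkey : t - e * (k cs : ZMod q) = hstar := by rw [hcseq]; ring
      have hsplit : A (M+J) t
          = A M hstar + ∑ c ∈ (Finset.range (S^J)).erase cs, A M (t - e*(k c : ZMod q)) := by
        rw [hrec, ← Finset.add_sum_erase _ _ (Finset.mem_range.mpr hcslt), hkey]
      have hterm : ∀ c ∈ (Finset.range (S^J)).erase cs,
          mn i * (S:ℝ)^M ≤ (A M (t - e*(k c : ZMod q)) : ℝ) := by
        intro c _
        have h1 := hmnle i _ (htcHF c)
        have h2 := hPA i (t - e*(k c : ZMod q))
        rw [← hMdef] at h2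
        rw [h2]
        exact mul_le_mul_of_nonneg_right h1 (le_of_lt (hSMpos M))
      have hsum : ((Finset.range (S^J)).erase cs).card • (mn i * (S:ℝ)^M)
          ≤ ∑ c ∈ (Finset.range (S^J)).erase cs, (A M (t - e*(k c : ZMod q)) : ℝ) :=
        Finset.card_nsmul_le_sum _ _ _ hterm
      have hcard : ((Finset.range (S^J)).erase cs).card = S^J - 1 := by
        rw [Finset.card_erase_of_mem (Finset.mem_range.mpr hcslt), Finset.card_range]
      have hAstar : (A M hstar : ℝ) = mx i * (S:ℝ)^M := by
        have h2 := hPA i hstar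
        have h3 : mx i = P i hstar := hstareq
        rw [← hMdef] at h2
        rw [h2, h3]
      have hSJc : ((S^J - 1 : ℕ) : ℝ) = (S:ℝ)^J - 1 := by
        have : 1 ≤ S^J := Nat.one_le_pow _ _ (by omega)
        push_cast [Nat.cast_sub this]
        ring
      have hAlow : mx i * (S:ℝ)^M + ((S:ℝ)^J - 1) * (mn i * (S:ℝ)^M) ≤ (A (M+J) t : ℝ) := by
        rw [hsplit]
        push_cast
        rw [hcard] at hsum
        rw [nsmul_eq_mul, hSJc] at hsum
        push_cast at hsum ⊢
        linarith [hAstar]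
      rw [hPrw]
      rw [le_div_iff₀ (mul_pos (hSMpos M) (hSMpos J))]
      have hβe : β * (S:ℝ)^J = 1 := by
        rw [hβdef]
        field_simp
      calc (mn i + β*(mx i - mn i)) * ((S:ℝ)^M * (S:ℝ)^J)
          = mx i * (S:ℝ)^M + ((S:ℝ)^J - 1) * (mn i * (S:ℝ)^M) := by
            linear_combination ((mx i - mn i) * (S:ℝ)^M) * hβe
        _ ≤ (A (M+J) t : ℝ) := hAlow
    · -- upper bound, using a witness achieving the min
      obtain ⟨hstar, hstarmem, hstareq⟩ := Finset.exists_mem_eq_inf' hne (P i)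
      have hstarE : hstar ∈ E := (hHF _).mp hstarmem
      obtain ⟨cs, hcslt, hcseq⟩ := hJwit (t - hstar) (hEsub _ ht _ hstarE)
      have hkey : t - e * (k cs : ZMod q) = hstar := by rw [hcseq]; ring
      have hsplit : A (M+J) t
          = A M hstar + ∑ c ∈ (Finset.range (S^J)).erase cs, A M (t - e*(k c : ZMod q)) := by
        rw [hrec, ← Finset.add_sum_erase _ _ (Finset.mem_range.mpr hcslt), hkey]
      have hterm : ∀ c ∈ (Finset.range (S^J)).erase cs,
          (A M (t - e*(k c : ZMod q)) : ℝ) ≤ mx i * (S:ℝ)^M := by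
        intro c _
        have h1 := hmxge i _ (htcHF c)
        have h2 := hPA i (t - e*(k c : ZMod q))
        rw [← hMdef] at h2
        rw [h2]
        exact mul_le_mul_of_nonneg_right h1 (le_of_lt (hSMpos M))
      have hsum : ∑ c ∈ (Finset.range (S^J)).erase cs, (A M (t - e*(k c : ZMod q)) : ℝ)
          ≤ ((Finset.range (S^J)).erase cs).card • (mx i * (S:ℝ)^M) :=
        Finset.sum_le_card_nsmul _ _ _ hterm
      have hcard : ((Finset.range (S^J)).erase cs).card = S^J - 1 := by
        rw [Finset.card_erase_of_mem (Finset.mem_range.mpr hcslt), Finset.card_range]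
      have hAstar : (A M hstar : ℝ) = mn i * (S:ℝ)^M := by
        have h2 := hPA i hstar
        have h3 : mn i = P i hstar := hstareq
        rw [← hMdef] at h2
        rw [h2, h3]
      have hSJc : ((S^J - 1 : ℕ) : ℝ) = (S:ℝ)^J - 1 := by
        have : 1 ≤ S^J := Nat.one_le_pow _ _ (by omega)
        push_cast [Nat.cast_sub this]
        ring
      have hAup : (A (M+J) t : ℝ) ≤ mn i * (S:ℝ)^M + ((S:ℝ)^J - 1) * (mx i * (S:ℝ)^M) := by
        rw [hsplit]
        push_cast
        rw [hcard] at hsum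
        rw [nsmul_eq_mul, hSJc] at hsum
        push_cast at hsum ⊢
        linarith [hAstar]
      rw [hPrw]
      rw [div_le_iff₀ (mul_pos (hSMpos M) (hSMpos J))]
      have hβe : β * (S:ℝ)^J = 1 := by
        rw [hβdef]
        field_simp
      calc (A (M+J) t : ℝ)
          ≤ mn i * (S:ℝ)^M + ((S:ℝ)^J - 1) * (mx i * (S:ℝ)^M) := hAup
        _ = (mx i - β*(mx i - mn i)) * ((S:ℝ)^M * (S:ℝ)^J) := by
            linear_combination ((mx i - mn i) * (S:ℝ)^M) * hβe
  -- min/max evolution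
  have G4up : ∀ i, mx (i+1) ≤ mx i - β * (mx i - mn i) :=
    fun i => Finset.sup'_le hne _ (fun h hh => (G3 i h ((hHF h).mp hh)).2)
  have G4lo : ∀ i, mn i + β * (mx i - mn i) ≤ mn (i+1) :=
    fun i => Finset.le_inf' hne _ (fun h hh => (G3 i h ((hHF h).mp hh)).1)
  have hoscnn : ∀ i, 0 ≤ mx i - mn i := fun i => by linarith [hmnmx i]
  have hmxmono : ∀ i j, i ≤ j → mx j ≤ mx i := by
    intro i j hij
    induction j with
    | zero => have : i = 0 := by omega
              rw [this]
    | succ j ih =>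
      rcases Nat.lt_or_ge i (j+1) with h | h
      · have h1 := ih (by omega)
        have := G4up j
        have := hoscnn j
        nlinarith [hβpos]
      · have : i = j + 1 := by omega
        rw [this]
  have hmnmono : ∀ i j, i ≤ j → mn i ≤ mn j := by
    intro i j hij
    induction j with
    | zero => have : i = 0 := by omega
              rw [this]
    | succ j ih =>
      rcases Nat.lt_or_ge i (j+1) with h | h
      · have h1 := ih (by omega)
        have := G4lo j
        have := hoscnn j
        nlinarith [hβpos]
      · have : i = j + 1 := by omega
        rw [this]
  have hosc : ∀ i, mx i - mn i ≤ (1 - 2*β)^i := by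
    intro i
    induction i with
    | zero =>
      simp only [pow_zero]
      linarith [hmx1 0, hmn0 0]
    | succ i ih =>
      have h1 := G4up i
      have h2 := G4lo i
      have h3 : mx (i+1) - mn (i+1) ≤ (1 - 2*β) * (mx i - mn i) := by linarith
      calc mx (i+1) - mn (i+1) ≤ (1 - 2*β) * (mx i - mn i) := h3
      _ ≤ (1 - 2*β) * (1 - 2*β)^i := by
          have : (0:ℝ) ≤ 1 - 2*β := by linarith
          exact mul_le_mul_of_nonneg_left ih this
      _ = (1 - 2*β)^(i+1) := by ring
  -- positivity of mn 1
  have hA10 : 1 ≤ A 1 0 := by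
    rw [hAdef]
    rw [Nat.one_le_iff_ne_zero, ← Nat.pos_iff_ne_zero, Finset.card_pos]
    refine ⟨0, ?_⟩
    rw [Finset.mem_filter, Finset.mem_range]
    constructor
    · rw [pow_one]; omega
    · rw [hk0]; simp
  have hmn1 : (1:ℝ)/(S:ℝ)^(1+J) ≤ mn 1 := by
    apply Finset.le_inf' hne
    intro h hh
    have hhE : h ∈ E := (hHF h).mp hh
    obtain ⟨ch, hchlt, hcheq⟩ := hJwit h hhE
    have hA1J : A 1 0 ≤ A (1 + J) h := by
      rw [REC 1 (le_refl 1) J h]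
      have hmem : ch ∈ Finset.range (S^J) := Finset.mem_range.mpr hchlt
      have hzero : h - e * (k ch : ZMod q) = 0 := by rw [hcheq]; ring
      calc A 1 0 = A 1 (h - e * (k ch : ZMod q)) := by rw [hzero]
      _ ≤ ∑ c ∈ Finset.range (S^J), A 1 (h - e * (k c : ZMod q)) :=
        Finset.single_le_sum (f := fun c => A 1 (h - e * (k c : ZMod q))) (fun c _ => Nat.zero_le _) hmem
    have h1 : (1:ℝ) ≤ (A (1+J) h : ℝ) := by exact_mod_cast le_trans hA10 hA1J
    have hidx : 1 + 1*J = 1 + J := by ring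
    simp only [hPdef, hidx]
    exact (div_le_div_iff_of_pos_right (hSMpos (1+J))).mpr h1
  -- the limit value
  have hbdd : BddAbove (Set.range mn) := by
    refine ⟨1, ?_⟩
    rintro _ ⟨i, rfl⟩
    exact le_trans (hmnmx i) (hmx1 i)
  set Λ : ℝ := ⨆ i, mn i with hΛdef
  have hΛge : ∀ i, mn i ≤ Λ := fun i => le_ciSup hbdd i
  have hΛle : ∀ i, Λ ≤ mx i := by
    intro i
    apply ciSup_le
    intro j
    rcases le_total j i with h | h
    · exact le_trans (hmnmono j i h) (hmnmx i)
    · exact le_trans (hmnmx j) (hmxmono i j h)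
  have hΛpos : 0 < Λ := by
    have h1 : (0:ℝ) < 1/(S:ℝ)^(1+J) := div_pos one_pos (hSMpos _)
    linarith [le_trans hmn1 (hΛge 1)]
  have hΛ1 : Λ ≤ 1 := le_trans (hΛle 0) (hmx1 0)
  have UE : ∀ i t, t ∈ E → |P i t - Λ| ≤ (1 - 2*β)^i := by
    intro i t ht
    have htHF : t ∈ HF := (hHF t).mpr ht
    have h1 := hmnle i t htHF
    have h2 := hmxge i t htHF
    have h3 := hΛge i
    have h4 := hΛle i
    have h5 := hosc i
    rw [abs_le]
    constructor <;> linarith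
  -- final assembly
  set FA : ℕ → ℕ :=
    fun N => ((Finset.range N).filter (fun n => ((k n : ZMod q) = 0))).card with hFAdef
  have hFAeq : ∀ N : ℕ,
      ((Finset.range N).filter (fun n => q ∣ k n)).card = FA N := by
    intro N
    simp only [hFAdef]
    congr 1
    apply Finset.filter_congr
    intro n _
    exact Iff.symm (ZMod.natCast_eq_zero_iff (k n) q)
  have hFAmono : ∀ {N N' : ℕ}, N ≤ N' → FA N ≤ FA N' := fun h =>
    Finset.card_le_card (Finset.filter_subset_filter _ (Finset.range_subset_range.mpr h))
  refine ⟨Λ, hΛpos, ?_⟩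
  have hgoal : (fun N : ℕ => (((Finset.range N).filter (fun n => q ∣ k n)).card : ℝ) / N)
      = fun N : ℕ => (FA N : ℝ) / N := by
    funext N; rw [hFAeq]
  rw [hgoal, Metric.tendsto_atTop]
  intro ε hε
  set ε' := min ε 1 with hε'def
  have hε'pos : 0 < ε' := lt_min hε (by norm_num)
  have hε'le1 : ε' ≤ 1 := min_le_right _ _
  have hε'leε : ε' ≤ ε := min_le_left _ _
  have h2β : 1 - 2*β < 1 := by linarith
  have h2β0 : 0 ≤ 1 - 2*β := by linarith
  obtain ⟨i, hi⟩ := exists_pow_lt_of_lt_one (show (0:ℝ) < ε'/4 by linarith) h2β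
  set M := 1 + i*J with hMdef2
  have hM1 : 1 ≤ M := by omega
  set SM : ℕ := S^M with hSMdef
  have hSMpos' : 0 < SM := pow_pos (by omega) _
  have hSMR : (0:ℝ) < (SM:ℝ) := by exact_mod_cast hSMpos'
  have hSMcast : (SM:ℝ) = (S:ℝ)^M := by rw [hSMdef, Nat.cast_pow]
  obtain ⟨N₁, hN₁⟩ := exists_nat_ge (8 * (SM:ℝ) / ε')
  refine ⟨max N₁ 1, fun N hN => ?_⟩
  have hN1 : 1 ≤ N := le_trans (le_max_right _ _) hN
  have hNR : (0:ℝ) < (N:ℝ) := by exact_mod_cast hN1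
  have hNge : 8 * (SM:ℝ) / ε' ≤ (N:ℝ) :=
    le_trans hN₁ (by exact_mod_cast le_trans (le_max_left _ _) hN)
  have hSMN : 8 * (SM:ℝ) ≤ ε' * N := by
    rw [div_le_iff₀ hε'pos] at hNge; linarith
  set m₀ := N / SM with hm₀def
  have hdm := Nat.div_add_mod N SM
  have hmod : N % SM < SM := Nat.mod_lt _ hSMpos'
  have hb1' : m₀ * SM ≤ N := Nat.div_mul_le_self N SM
  have hb2' : N ≤ (m₀+1) * SM := by
    have h1 : (m₀+1) * SM = SM * m₀ + SM := by ring
    have h2 : SM * m₀ + N % SM = N := hdm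
    omega
  have hup : FA N ≤ ∑ m ∈ Finset.range (m₀+1), A M (-(e * (k m : ZMod q))) := by
    rw [← BLOCK M hM1 (m₀+1)]
    exact hFAmono hb2'
  have hlo : ∑ m ∈ Finset.range m₀, A M (-(e * (k m : ZMod q))) ≤ FA N := by
    rw [← BLOCK M hM1 m₀]
    exact hFAmono hb1'
  -- per-term bounds
  have hterm : ∀ m : ℕ,
      (Λ - ε'/4) * (SM:ℝ) ≤ (A M (-(e * (k m : ZMod q))) : ℝ) ∧
      (A M (-(e * (k m : ZMod q))) : ℝ) ≤ (Λ + ε'/4) * (SM:ℝ) := by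
    intro m
    have htE : -(e * (k m : ZMod q)) ∈ E := hEneg _ (hmemE m)
    have hUE := UE i _ htE
    rw [abs_le] at hUE
    have hPA' := hPA i (-(e * (k m : ZMod q)))
    rw [← hMdef2] at hPA'
    rw [hPA', hSMcast]
    constructor
    · have : Λ - ε'/4 ≤ P i (-(e * (k m : ZMod q))) := by linarith [hUE.1, hi]
      exact mul_le_mul_of_nonneg_right this (le_of_lt (hSMpos M))
    · have : P i (-(e * (k m : ZMod q))) ≤ Λ + ε'/4 := by linarith [hUE.2, hi]
      exact mul_le_mul_of_nonneg_right this (le_of_lt (hSMpos M))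
  -- summed bounds in ℝ
  have hsumup : (FA N : ℝ) ≤ ((m₀:ℝ)+1) * ((Λ + ε'/4) * (SM:ℝ)) := by
    have h1 : (FA N : ℝ) ≤ ∑ m ∈ Finset.range (m₀+1), (A M (-(e * (k m : ZMod q))) : ℝ) := by
      push_cast [← Nat.cast_sum]
      exact_mod_cast hup
    have h2 : ∑ m ∈ Finset.range (m₀+1), (A M (-(e * (k m : ZMod q))) : ℝ)
        ≤ (m₀+1) • ((Λ + ε'/4) * (SM:ℝ)) :=
      Finset.sum_le_card_nsmul _ _ _ (by
        intro m _
        exact (hterm m).2) |>.trans (by rw [Finset.card_range])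
    rw [nsmul_eq_mul] at h2
    push_cast at h2
    linarith
  have hsumlo : (m₀:ℝ) * ((Λ - ε'/4) * (SM:ℝ)) ≤ (FA N : ℝ) := by
    have h1 : ∑ m ∈ Finset.range m₀, (A M (-(e * (k m : ZMod q))) : ℝ) ≤ (FA N : ℝ) := by
      push_cast [← Nat.cast_sum]
      exact_mod_cast hlo
    have h2 : m₀ • ((Λ - ε'/4) * (SM:ℝ))
        ≤ ∑ m ∈ Finset.range m₀, (A M (-(e * (k m : ZMod q))) : ℝ) := by
      have := Finset.card_nsmul_le_sum (Finset.range m₀)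
        (fun m => (A M (-(e * (k m : ZMod q))) : ℝ)) _ (by
          intro m _
          exact (hterm m).1)
      rwa [Finset.card_range] at this
    rw [nsmul_eq_mul] at h2
    linarith
  -- cast interval bounds on N
  have hb1R : (m₀:ℝ) * (SM:ℝ) ≤ (N:ℝ) := by exact_mod_cast hb1'
  have hb2R : (N:ℝ) ≤ ((m₀:ℝ)+1) * (SM:ℝ) := by exact_mod_cast hb2'
  -- conclude
  have hFA0 : (0:ℝ) ≤ (FA N : ℝ) := Nat.cast_nonneg _
  rw [Real.dist_eq, abs_sub_lt_iff]
  have hgoal1 : (FA N : ℝ) / N - Λ < ε' := by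
    rw [div_sub' (ne_of_gt hNR), div_lt_iff₀ hNR]
    -- FA N - Λ * N < ε' * N
    nlinarith [hΛpos, hΛ1, hε'pos, hε'le1, hSMR, hNR]
  have hgoal2 : Λ - (FA N : ℝ) / N < ε' := by
    rw [sub_div' (ne_of_gt hNR)]
    rw [div_lt_iff₀ hNR]
    rcases le_or_gt 0 (Λ - ε'/4) with hc | hc
    · nlinarith [hΛpos, hΛ1, hε'pos, hε'le1, hSMR, hNR]
    · nlinarith [hΛpos, hΛ1, hε'pos, hε'le1, hSMR, hNR, hFA0]
  constructor
  · linarith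
  · linarith
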